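/- Let F = (ξ, η, ζ) : ℝ³ → ℝ³ be a C¹ vector field and σ : ℝ² → ℝ³ a C² map. Then Stokes' formula holds for the unit square: ∫₀¹ ⟨F(σ(s,0)), ∂₁σ(s,0)⟩ ds + ∫₀¹ ⟨F(σ(1,τ)), ∂₂σ(1,τ)⟩ dτ − ∫₀¹ ⟨F(σ(s,1)), ∂₁σ(s,1)⟩ ds − ∫₀¹ ⟨F(σ(0,τ)), ∂₂σ(0,τ)⟩ dτ = ∬_{[0,1]²} ⟨ (curl F)(σ(s,τ)), ∂₁σ(s,τ) × ∂₂σ(s,τ) ⟩ ds dτ. -/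

import Mathlib

open intervalIntegral
open MeasureTheory

lemma swap01 (g : ℝ → ℝ → ℝ) (hg : Continuous fun p : ℝ × ℝ => g p.1 p.2) :
    ∫ s in (0:ℝ)..1, ∫ τ in (0:ℝ)..1, g s τ = ∫ τ in (0:ℝ)..1, ∫ s in (0:ℝ)..1, g s τ := by
  have h01 : (0:ℝ) ≤ 1 := zero_le_one
  have hint : Integrable (Function.uncurry g)
      ((volume.restrict (Set.Ioc (0:ℝ) 1)).prod (volume.restrict (Set.Ioc (0:ℝ) 1))) := by
    rw [Measure.prod_restrict]
    refine IntegrableOn.mono_set (t := (Set.Icc (0:ℝ) 1) ×ˢ (Set.Icc (0:ℝ) 1)) ?_ ?_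
    · exact (hg.continuousOn).integrableOn_compact (isCompact_Icc.prod isCompact_Icc)
    · exact Set.prod_mono Set.Ioc_subset_Icc_self Set.Ioc_subset_Icc_self
  simp only [intervalIntegral.integral_of_le h01]
  exact integral_integral_swap hint

lemma square_green (P Q Qs Pt R : ℝ → ℝ → ℝ)
    (hQ : ∀ s τ, HasDerivAt (fun s' => Q s' τ) (Qs s τ) s)
    (hP : ∀ s τ, HasDerivAt (fun τ' => P s τ') (Pt s τ) τ)
    (hQc : Continuous fun p : ℝ × ℝ => Q p.1 p.2)
    (hPc : Continuous fun p : ℝ × ℝ => P p.1 p.2)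
    (hQsc : Continuous fun p : ℝ × ℝ => Qs p.1 p.2)
    (hPtc : Continuous fun p : ℝ × ℝ => Pt p.1 p.2)
    (hR : ∀ s τ, Qs s τ - Pt s τ = R s τ) :
    (∫ s in (0:ℝ)..1, P s 0) + (∫ τ in (0:ℝ)..1, Q 1 τ)
      - (∫ s in (0:ℝ)..1, P s 1) - (∫ τ in (0:ℝ)..1, Q 0 τ)
    = ∫ s in (0:ℝ)..1, ∫ τ in (0:ℝ)..1, R s τ := by
  have cQs_s : ∀ τ, Continuous fun s => Qs s τ :=
    fun τ => hQsc.comp (continuous_id.prodMk continuous_const)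
  have cQs_t : ∀ s, Continuous fun τ => Qs s τ :=
    fun s => hQsc.comp (continuous_const.prodMk continuous_id)
  have cPt_t : ∀ s, Continuous fun τ => Pt s τ :=
    fun s => hPtc.comp (continuous_const.prodMk continuous_id)
  have hFTC1 : ∀ τ, Q 1 τ - Q 0 τ = ∫ s in (0:ℝ)..1, Qs s τ := fun τ =>
    (integral_eq_sub_of_hasDerivAt (fun s _ => hQ s τ)
      ((cQs_s τ).intervalIntegrable 0 1)).symm
  have hFTC2 : ∀ s, P s 1 - P s 0 = ∫ τ in (0:ℝ)..1, Pt s τ := fun s =>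
    (integral_eq_sub_of_hasDerivAt (fun τ _ => hP s τ)
      ((cPt_t s).intervalIntegrable 0 1)).symm
  have hiQ1 : IntervalIntegrable (fun τ => Q 1 τ) volume 0 1 :=
    (hQc.comp (continuous_const.prodMk continuous_id)).intervalIntegrable 0 1
  have hiQ0 : IntervalIntegrable (fun τ => Q 0 τ) volume 0 1 :=
    (hQc.comp (continuous_const.prodMk continuous_id)).intervalIntegrable 0 1
  have hiP1 : IntervalIntegrable (fun s => P s 1) volume 0 1 :=
    (hPc.comp (continuous_id.prodMk continuous_const)).intervalIntegrable 0 1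
  have hiP0 : IntervalIntegrable (fun s => P s 0) volume 0 1 :=
    (hPc.comp (continuous_id.prodMk continuous_const)).intervalIntegrable 0 1
  have hiQs : IntervalIntegrable (fun s => ∫ τ in (0:ℝ)..1, Qs s τ) volume 0 1 :=
    (intervalIntegral.continuous_parametric_intervalIntegral_of_continuous' hQsc 0 1).intervalIntegrable 0 1
  have hiPt : IntervalIntegrable (fun s => ∫ τ in (0:ℝ)..1, Pt s τ) volume 0 1 :=
    (intervalIntegral.continuous_parametric_intervalIntegral_of_continuous' hPtc 0 1).intervalIntegrable 0 1
  calc (∫ s in (0:ℝ)..1, P s 0) + (∫ τ in (0:ℝ)..1, Q 1 τ)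
      - (∫ s in (0:ℝ)..1, P s 1) - (∫ τ in (0:ℝ)..1, Q 0 τ)
      = (∫ τ in (0:ℝ)..1, (Q 1 τ - Q 0 τ)) - (∫ s in (0:ℝ)..1, (P s 1 - P s 0)) := by
        rw [intervalIntegral.integral_sub hiQ1 hiQ0, intervalIntegral.integral_sub hiP1 hiP0]
        ring
    _ = (∫ τ in (0:ℝ)..1, ∫ s in (0:ℝ)..1, Qs s τ)
        - (∫ s in (0:ℝ)..1, ∫ τ in (0:ℝ)..1, Pt s τ) := by
        simp only [hFTC1, hFTC2]
    _ = (∫ s in (0:ℝ)..1, ∫ τ in (0:ℝ)..1, Qs s τ)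
        - (∫ s in (0:ℝ)..1, ∫ τ in (0:ℝ)..1, Pt s τ) := by
        rw [swap01 Qs hQsc]
    _ = ∫ s in (0:ℝ)..1, ((∫ τ in (0:ℝ)..1, Qs s τ) - (∫ τ in (0:ℝ)..1, Pt s τ)) := by
        rw [intervalIntegral.integral_sub hiQs hiPt]
    _ = ∫ s in (0:ℝ)..1, ∫ τ in (0:ℝ)..1, (Qs s τ - Pt s τ) := by
        refine intervalIntegral.integral_congr fun s _ => ?_
        rw [intervalIntegral.integral_sub ((cQs_t s).intervalIntegrable 0 1)
          ((cPt_t s).intervalIntegrable 0 1)]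
    _ = ∫ s in (0:ℝ)..1, ∫ τ in (0:ℝ)..1, R s τ := by
        simp only [hR]


/-- The cross product on `Fin 3 → ℝ`. -/
def cross3 (v w : Fin 3 → ℝ) : Fin 3 → ℝ :=
  ![v 1 * w 2 - v 2 * w 1, v 2 * w 0 - v 0 * w 2, v 0 * w 1 - v 1 * w 0]

/-- The curl of a vector field on `Fin 3 → ℝ`:
`curl w = (∂₂w₃ − ∂₃w₂, ∂₃w₁ − ∂₁w₃, ∂₁w₂ − ∂₂w₁)`. -/
noncomputable def curl3 (F : (Fin 3 → ℝ) → (Fin 3 → ℝ)) (x : Fin 3 → ℝ) : Fin 3 → ℝ :=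
  ![fderiv ℝ (fun y => F y 2) x (Pi.single 1 1) - fderiv ℝ (fun y => F y 1) x (Pi.single 2 1),
    fderiv ℝ (fun y => F y 0) x (Pi.single 2 1) - fderiv ℝ (fun y => F y 2) x (Pi.single 0 1),
    fderiv ℝ (fun y => F y 1) x (Pi.single 0 1) - fderiv ℝ (fun y => F y 0) x (Pi.single 1 1)]

/-- §7, equation (1): the Kelvin–Stokes formula on (the image of) the unit square:
the line integral of `F` around the boundary equals the flux of `curl F` through
the surface `σ`. -/
lemma fderiv_coord_apply (F : (Fin 3 → ℝ) → (Fin 3 → ℝ)) (hF : Differentiable ℝ F)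
    (x v : Fin 3 → ℝ) (j : Fin 3) :
    fderiv ℝ (fun y => F y j) x v = fderiv ℝ F x v j := by
  have h := ((ContinuousLinearMap.proj (R := ℝ) (φ := fun _ : Fin 3 => ℝ) j).hasFDerivAt.comp x
    (hF x).hasFDerivAt).fderiv
  rw [show (fun y => F y j) = (ContinuousLinearMap.proj (R := ℝ) (φ := fun _ : Fin 3 => ℝ) j) ∘ F
      from rfl, h]
  rfl

lemma key_alg (L : (Fin 3 → ℝ) →L[ℝ] (Fin 3 → ℝ)) (u v : Fin 3 → ℝ) :
    (∑ i, ((L u) i * v i - (L v) i * u i))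
    = ∑ i, (![L (Pi.single 1 1) 2 - L (Pi.single 2 1) 1,
              L (Pi.single 2 1) 0 - L (Pi.single 0 1) 2,
              L (Pi.single 0 1) 1 - L (Pi.single 1 1) 0] i) * cross3 u v i := by
  have hdec : ∀ w : Fin 3 → ℝ,
      L w = w 0 • L (Pi.single 0 1) + w 1 • L (Pi.single 1 1) + w 2 • L (Pi.single 2 1) := by
    intro w
    rw [← _root_.map_smul, ← _root_.map_smul, ← _root_.map_smul, ← map_add, ← map_add]
    congr 1
    funext i
    fin_cases i <;> simp [Pi.single_apply]
  rw [hdec u, hdec v]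
  simp only [Fin.sum_univ_three, cross3, Pi.add_apply, Pi.smul_apply, smul_eq_mul,
    Matrix.cons_val_zero, Matrix.cons_val_one, Matrix.head_cons, Matrix.cons_val_two,
    Matrix.tail_cons]
  ring

theorem hankel_stokes_unit_square
    (F : (Fin 3 → ℝ) → (Fin 3 → ℝ)) (σ : ℝ → ℝ → (Fin 3 → ℝ))
    (hF : ContDiff ℝ 1 F)
    (hσ : ContDiff ℝ 2 (fun q : ℝ × ℝ => σ q.1 q.2)) :
    (∫ s in (0:ℝ)..1, ∑ i, F (σ s 0) i * deriv (fun s' => σ s' 0) s i)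
      + (∫ τ in (0:ℝ)..1, ∑ i, F (σ 1 τ) i * deriv (fun τ' => σ 1 τ') τ i)
      - (∫ s in (0:ℝ)..1, ∑ i, F (σ s 1) i * deriv (fun s' => σ s' 1) s i)
      - (∫ τ in (0:ℝ)..1, ∑ i, F (σ 0 τ) i * deriv (fun τ' => σ 0 τ') τ i)
    = ∫ s in (0:ℝ)..1, ∫ τ in (0:ℝ)..1, ∑ i,
        curl3 F (σ s τ) i
          * cross3 (deriv (fun s' => σ s' τ) s) (deriv (fun τ' => σ s τ') τ) i := by
  have hda : Differentiable ℝ (fun q : ℝ × ℝ => σ q.1 q.2) := hσ.differentiable two_ne_zero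
  have hfaC1 : ContDiff ℝ 1 (fderiv ℝ (fun q : ℝ × ℝ => σ q.1 q.2)) :=
    hσ.fderiv_right (le_refl 2)
  have hdfa : Differentiable ℝ (fderiv ℝ (fun q : ℝ × ℝ => σ q.1 q.2)) :=
    hfaC1.differentiable one_ne_zero
  have hacont : Continuous (fun q : ℝ × ℝ => σ q.1 q.2) := hσ.continuous
  have hfacont : Continuous (fderiv ℝ (fun q : ℝ × ℝ => σ q.1 q.2)) :=
    hσ.continuous_fderiv two_ne_zero
  have hEcont : Continuous (fderiv ℝ (fderiv ℝ (fun q : ℝ × ℝ => σ q.1 q.2))) :=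
    hfaC1.continuous_fderiv one_ne_zero
  have hFd : Differentiable ℝ F := hF.differentiable one_ne_zero
  have hFcont : Continuous F := hF.continuous
  have hdFcont : Continuous (fderiv ℝ F) := hF.continuous_fderiv one_ne_zero
  have hcurve1 : ∀ (s τ : ℝ), HasDerivAt (fun s' => ((s', τ) : ℝ × ℝ)) (1, 0) s :=
    fun s τ => (hasDerivAt_id s).prodMk (hasDerivAt_const s τ)
  have hcurve2 : ∀ (s τ : ℝ), HasDerivAt (fun τ' => ((s, τ') : ℝ × ℝ)) (0, 1) τ :=
    fun s τ => (hasDerivAt_const τ s).prodMk (hasDerivAt_id τ)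
  have hσ1 : ∀ s τ, HasDerivAt (fun s' => σ s' τ)
      (fderiv ℝ (fun q : ℝ × ℝ => σ q.1 q.2) (s, τ) (1, 0)) s :=
    fun s τ => by have := (hda (s, τ)).hasFDerivAt.comp_hasDerivAt s (hcurve1 s τ); exact this
  have hσ2 : ∀ s τ, HasDerivAt (fun τ' => σ s τ')
      (fderiv ℝ (fun q : ℝ × ℝ => σ q.1 q.2) (s, τ) (0, 1)) τ :=
    fun s τ => (hda (s, τ)).hasFDerivAt.comp_hasDerivAt τ (hcurve2 s τ)
  have hd1 : ∀ s τ, deriv (fun s' => σ s' τ) s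
      = fderiv ℝ (fun q : ℝ × ℝ => σ q.1 q.2) (s, τ) (1, 0) := fun s τ => (hσ1 s τ).deriv
  have hd2 : ∀ s τ, deriv (fun τ' => σ s τ') τ
      = fderiv ℝ (fun q : ℝ × ℝ => σ q.1 q.2) (s, τ) (0, 1) := fun s τ => (hσ2 s τ).deriv
  -- derivative of Q in s
  have hQ : ∀ s τ, HasDerivAt
      (fun s' => ∑ i, F (σ s' τ) i * fderiv ℝ (fun q : ℝ × ℝ => σ q.1 q.2) (s', τ) (0, 1) i)
      (∑ i, (fderiv ℝ F (σ s τ) (fderiv ℝ (fun q : ℝ × ℝ => σ q.1 q.2) (s, τ) (1, 0)) i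
          * fderiv ℝ (fun q : ℝ × ℝ => σ q.1 q.2) (s, τ) (0, 1) i
        + F (σ s τ) i * fderiv ℝ (fderiv ℝ (fun q : ℝ × ℝ => σ q.1 q.2)) (s, τ) (1, 0) (0, 1) i))
      s := by
    intro s τ
    have hFc : HasDerivAt (fun s' => F (σ s' τ))
        (fderiv ℝ F (σ s τ) (fderiv ℝ (fun q : ℝ × ℝ => σ q.1 q.2) (s, τ) (1, 0))) s :=
      (hFd (σ s τ)).hasFDerivAt.comp_hasDerivAt s (hσ1 s τ)
    have hDc : HasDerivAt (fun s' => fderiv ℝ (fun q : ℝ × ℝ => σ q.1 q.2) (s', τ))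
        (fderiv ℝ (fderiv ℝ (fun q : ℝ × ℝ => σ q.1 q.2)) (s, τ) (1, 0)) s :=
      (hdfa (s, τ)).hasFDerivAt.comp_hasDerivAt s (hcurve1 s τ)
    refine HasDerivAt.fun_sum fun i _ => ?_
    have h1 := hasDerivAt_pi.mp hFc i
    have h2 : HasDerivAt (fun s' => fderiv ℝ (fun q : ℝ × ℝ => σ q.1 q.2) (s', τ) (0, 1) i)
        (fderiv ℝ (fderiv ℝ (fun q : ℝ × ℝ => σ q.1 q.2)) (s, τ) (1, 0) (0, 1) i) s :=
      ((ContinuousLinearMap.proj (R := ℝ) (φ := fun _ : Fin 3 => ℝ) i).comp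
        (ContinuousLinearMap.apply ℝ (Fin 3 → ℝ) (((0:ℝ), (1:ℝ)) : ℝ × ℝ))).hasFDerivAt.comp_hasDerivAt s hDc
    exact h1.mul h2
  -- derivative of P in τ
  have hP : ∀ s τ, HasDerivAt
      (fun τ' => ∑ i, F (σ s τ') i * fderiv ℝ (fun q : ℝ × ℝ => σ q.1 q.2) (s, τ') (1, 0) i)
      (∑ i, (fderiv ℝ F (σ s τ) (fderiv ℝ (fun q : ℝ × ℝ => σ q.1 q.2) (s, τ) (0, 1)) i
          * fderiv ℝ (fun q : ℝ × ℝ => σ q.1 q.2) (s, τ) (1, 0) i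
        + F (σ s τ) i * fderiv ℝ (fderiv ℝ (fun q : ℝ × ℝ => σ q.1 q.2)) (s, τ) (0, 1) (1, 0) i))
      τ := by
    intro s τ
    have hFc : HasDerivAt (fun τ' => F (σ s τ'))
        (fderiv ℝ F (σ s τ) (fderiv ℝ (fun q : ℝ × ℝ => σ q.1 q.2) (s, τ) (0, 1))) τ :=
      (hFd (σ s τ)).hasFDerivAt.comp_hasDerivAt τ (hσ2 s τ)
    have hDc : HasDerivAt (fun τ' => fderiv ℝ (fun q : ℝ × ℝ => σ q.1 q.2) (s, τ'))
        (fderiv ℝ (fderiv ℝ (fun q : ℝ × ℝ => σ q.1 q.2)) (s, τ) (0, 1)) τ :=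
      (hdfa (s, τ)).hasFDerivAt.comp_hasDerivAt τ (hcurve2 s τ)
    refine HasDerivAt.fun_sum fun i _ => ?_
    have h1 := hasDerivAt_pi.mp hFc i
    have h2 : HasDerivAt (fun τ' => fderiv ℝ (fun q : ℝ × ℝ => σ q.1 q.2) (s, τ') (1, 0) i)
        (fderiv ℝ (fderiv ℝ (fun q : ℝ × ℝ => σ q.1 q.2)) (s, τ) (0, 1) (1, 0) i) τ :=
      ((ContinuousLinearMap.proj (R := ℝ) (φ := fun _ : Fin 3 => ℝ) i).comp
        (ContinuousLinearMap.apply ℝ (Fin 3 → ℝ) (((1:ℝ), (0:ℝ)) : ℝ × ℝ))).hasFDerivAt.comp_hasDerivAt τ hDc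
    exact h1.mul h2
  -- continuity facts
  have hQc : Continuous fun p : ℝ × ℝ =>
      ∑ i, F (σ p.1 p.2) i * fderiv ℝ (fun q : ℝ × ℝ => σ q.1 q.2) p (0, 1) i := by
    refine continuous_finset_sum _ fun i _ => ?_
    exact ((continuous_apply i).comp (hFcont.comp hacont)).mul
      ((continuous_apply i).comp (hfacont.clm_apply continuous_const))
  have hPc : Continuous fun p : ℝ × ℝ =>
      ∑ i, F (σ p.1 p.2) i * fderiv ℝ (fun q : ℝ × ℝ => σ q.1 q.2) p (1, 0) i := by
    refine continuous_finset_sum _ fun i _ => ?_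
    exact ((continuous_apply i).comp (hFcont.comp hacont)).mul
      ((continuous_apply i).comp (hfacont.clm_apply continuous_const))
  have hQsc : Continuous fun p : ℝ × ℝ =>
      ∑ i, (fderiv ℝ F (σ p.1 p.2) (fderiv ℝ (fun q : ℝ × ℝ => σ q.1 q.2) p (1, 0)) i
          * fderiv ℝ (fun q : ℝ × ℝ => σ q.1 q.2) p (0, 1) i
        + F (σ p.1 p.2) i * fderiv ℝ (fderiv ℝ (fun q : ℝ × ℝ => σ q.1 q.2)) p (1, 0) (0, 1) i) := by
    refine continuous_finset_sum _ fun i _ => ?_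
    refine Continuous.add ?_ ?_
    · exact ((continuous_apply i).comp
        (((hdFcont.comp hacont)).clm_apply (hfacont.clm_apply continuous_const))).mul
        ((continuous_apply i).comp (hfacont.clm_apply continuous_const))
    · exact ((continuous_apply i).comp (hFcont.comp hacont)).mul
        ((continuous_apply i).comp ((hEcont.clm_apply continuous_const).clm_apply continuous_const))
  have hPtc : Continuous fun p : ℝ × ℝ =>
      ∑ i, (fderiv ℝ F (σ p.1 p.2) (fderiv ℝ (fun q : ℝ × ℝ => σ q.1 q.2) p (0, 1)) i
          * fderiv ℝ (fun q : ℝ × ℝ => σ q.1 q.2) p (1, 0) i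
        + F (σ p.1 p.2) i * fderiv ℝ (fderiv ℝ (fun q : ℝ × ℝ => σ q.1 q.2)) p (0, 1) (1, 0) i) := by
    refine continuous_finset_sum _ fun i _ => ?_
    refine Continuous.add ?_ ?_
    · exact ((continuous_apply i).comp
        (((hdFcont.comp hacont)).clm_apply (hfacont.clm_apply continuous_const))).mul
        ((continuous_apply i).comp (hfacont.clm_apply continuous_const))
    · exact ((continuous_apply i).comp (hFcont.comp hacont)).mul
        ((continuous_apply i).comp ((hEcont.clm_apply continuous_const).clm_apply continuous_const))
  -- pointwise identity Qs - Pt = curl ⬝ cross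
  have hR : ∀ s τ,
      (∑ i, (fderiv ℝ F (σ s τ) (fderiv ℝ (fun q : ℝ × ℝ => σ q.1 q.2) (s, τ) (1, 0)) i
          * fderiv ℝ (fun q : ℝ × ℝ => σ q.1 q.2) (s, τ) (0, 1) i
        + F (σ s τ) i * fderiv ℝ (fderiv ℝ (fun q : ℝ × ℝ => σ q.1 q.2)) (s, τ) (1, 0) (0, 1) i))
      - (∑ i, (fderiv ℝ F (σ s τ) (fderiv ℝ (fun q : ℝ × ℝ => σ q.1 q.2) (s, τ) (0, 1)) i
          * fderiv ℝ (fun q : ℝ × ℝ => σ q.1 q.2) (s, τ) (1, 0) i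
        + F (σ s τ) i * fderiv ℝ (fderiv ℝ (fun q : ℝ × ℝ => σ q.1 q.2)) (s, τ) (0, 1) (1, 0) i))
      = ∑ i, curl3 F (σ s τ) i
          * cross3 (fderiv ℝ (fun q : ℝ × ℝ => σ q.1 q.2) (s, τ) (1, 0))
              (fderiv ℝ (fun q : ℝ × ℝ => σ q.1 q.2) (s, τ) (0, 1)) i := by
    intro s τ
    have hsym : fderiv ℝ (fderiv ℝ (fun q : ℝ × ℝ => σ q.1 q.2)) (s, τ) (1, 0) (0, 1)
        = fderiv ℝ (fderiv ℝ (fun q : ℝ × ℝ => σ q.1 q.2)) (s, τ) (0, 1) (1, 0) :=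
      second_derivative_symmetric (fun y => (hda y).hasFDerivAt)
        ((hdfa (s, τ)).hasFDerivAt) _ _
    have hcurl : curl3 F (σ s τ)
        = ![fderiv ℝ F (σ s τ) (Pi.single 1 1) 2 - fderiv ℝ F (σ s τ) (Pi.single 2 1) 1,
            fderiv ℝ F (σ s τ) (Pi.single 2 1) 0 - fderiv ℝ F (σ s τ) (Pi.single 0 1) 2,
            fderiv ℝ F (σ s τ) (Pi.single 0 1) 1 - fderiv ℝ F (σ s τ) (Pi.single 1 1) 0] := by
      unfold curl3
      simp only [fderiv_coord_apply F hFd]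
    rw [← Finset.sum_sub_distrib]
    rw [show (∑ i, ((fderiv ℝ F (σ s τ) (fderiv ℝ (fun q : ℝ × ℝ => σ q.1 q.2) (s, τ) (1, 0)) i
          * fderiv ℝ (fun q : ℝ × ℝ => σ q.1 q.2) (s, τ) (0, 1) i
        + F (σ s τ) i * fderiv ℝ (fderiv ℝ (fun q : ℝ × ℝ => σ q.1 q.2)) (s, τ) (1, 0) (0, 1) i)
        - (fderiv ℝ F (σ s τ) (fderiv ℝ (fun q : ℝ × ℝ => σ q.1 q.2) (s, τ) (0, 1)) i
          * fderiv ℝ (fun q : ℝ × ℝ => σ q.1 q.2) (s, τ) (1, 0) i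
        + F (σ s τ) i * fderiv ℝ (fderiv ℝ (fun q : ℝ × ℝ => σ q.1 q.2)) (s, τ) (0, 1) (1, 0) i)))
        = ∑ i, ((fderiv ℝ F (σ s τ)) (fderiv ℝ (fun q : ℝ × ℝ => σ q.1 q.2) (s, τ) (1, 0)) i
            * fderiv ℝ (fun q : ℝ × ℝ => σ q.1 q.2) (s, τ) (0, 1) i
          - (fderiv ℝ F (σ s τ)) (fderiv ℝ (fun q : ℝ × ℝ => σ q.1 q.2) (s, τ) (0, 1)) i
            * fderiv ℝ (fun q : ℝ × ℝ => σ q.1 q.2) (s, τ) (1, 0) i)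
      from Finset.sum_congr rfl fun i _ => by rw [hsym]; ring]
    rw [key_alg, hcurl]
  simp only [hd1, hd2]
  exact square_green _ _ _ _ _ hQ hP hQc hPc hQsc hPtc hR
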